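/- Let Ω ⊂ ℝ^d be bounded and measurable, f : ℝ^d → ℝ a C¹ function with compact support, θ : ℝ^d → ℝ^d a C¹ vector field with bounded derivative, and T_ρ(x) = x + ρθ(x). Then j(ρ) = ∫_{T_ρ(Ω)} f(x) dx is differentiable at ρ = 0 with j'(0) = ∫_Ω div(f·θ)(x) dx = ∫_Ω (∇f(x)·θ(x) + f(x) div θ(x)) dx. -/

import Mathlib

open MeasureTheory Metric Filter

set_option maxHeartbeats 1000000 in
/-- Shape derivative of a volume functional with Eulerian integrand:
`j(ρ) = ∫_{T_ρ(Ω)} f dx` is differentiable at `ρ = 0` with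
`j'(0) = ∫_Ω (∇f·θ + f div θ) dx`. -/
theorem volume_functional_shape_derivative
    (d : ℕ) (Ω : Set (Fin d → ℝ)) (hΩb : Bornology.IsBounded Ω) (hΩm : MeasurableSet Ω)
    (f : (Fin d → ℝ) → ℝ) (hf : ContDiff ℝ 1 f) (hfc : HasCompactSupport f)
    (θ : (Fin d → ℝ) → (Fin d → ℝ)) (hθ : ContDiff ℝ 1 θ)
    (C : ℝ) (hC : ∀ x, ‖fderiv ℝ θ x‖ ≤ C) :
    HasDerivAt
      (fun ρ : ℝ => ∫ x in ((fun x => x + ρ • θ x) '' Ω), f x)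
      (∫ x in Ω,
        (fderiv ℝ f x (θ x) +
          f x * LinearMap.trace ℝ (Fin d → ℝ) (fderiv ℝ θ x).toLinearMap)) 0 := by
  have hθd : Differentiable ℝ θ := hθ.differentiable one_ne_zero
  have hfd : Differentiable ℝ f := hf.differentiable one_ne_zero
  have hC0 : 0 ≤ C := le_trans (norm_nonneg _) (hC 0)
  -- Lipschitz bound for θ
  have hlip : LipschitzWith C.toNNReal θ := by
    refine lipschitzWith_of_nnnorm_fderiv_le hθd fun x => ?_
    rw [← NNReal.coe_le_coe, coe_nnnorm, Real.coe_toNNReal _ hC0]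
    exact hC x
  have hθsub : ∀ x y, ‖θ x - θ y‖ ≤ C * ‖x - y‖ := by
    intro x y
    have := hlip.dist_le_mul x y
    rwa [dist_eq_norm, dist_eq_norm, Real.coe_toNNReal _ hC0] at this
  -- smallness radius
  set ε : ℝ := (2 * (C + 1))⁻¹ with hε_def
  have hε : 0 < ε := by positivity
  have hsmall : ∀ ρ : ℝ, ρ ∈ ball (0:ℝ) ε → |ρ| * C < 1 := by
    intro ρ hρ
    rw [mem_ball, dist_zero_right, Real.norm_eq_abs] at hρ
    have h1 : |ρ| * C ≤ |ρ| * (C + 1) := by nlinarith [abs_nonneg ρ]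
    have h2 : |ρ| * (C + 1) < ε * (C + 1) := by nlinarith
    have h3 : ε * (C + 1) ≤ 1 := by
      rw [hε_def]
      rw [inv_mul_le_iff₀ (by positivity)]
      nlinarith
    linarith
  -- the matrix of fderiv θ
  set M : (Fin d → ℝ) → Matrix (Fin d) (Fin d) ℝ :=
    fun x => LinearMap.toMatrix' (fderiv ℝ θ x).toLinearMap with hM_def
  have hMapply : ∀ x i j, M x i j = fderiv ℝ θ x (fun j' => if j' = j then 1 else 0) i := by
    intro x i j
    simp only [hM_def, LinearMap.toMatrix'_apply]
    show (fderiv ℝ θ x) (Pi.single j 1) i = _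
    rw [show (Pi.single j 1 : Fin d → ℝ) = fun j' => if j' = j then 1 else 0 from
      funext fun j' => Pi.single_apply j 1 j']
  have hMbound : ∀ x i j, |M x i j| ≤ C := by
    intro x i j
    rw [hMapply]
    have h1 : ‖(fun j' => if j' = j then (1:ℝ) else 0 : Fin d → ℝ)‖ ≤ 1 := by
      rw [pi_norm_le_iff_of_nonneg zero_le_one]
      intro k
      rcases eq_or_ne k j with h | h <;> simp [h]
    calc |fderiv ℝ θ x (fun j' => if j' = j then 1 else 0) i|
        ≤ ‖fderiv ℝ θ x (fun j' => if j' = j then 1 else 0)‖ := by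
          rw [← Real.norm_eq_abs]
          exact norm_le_pi_norm _ i
      _ ≤ ‖fderiv ℝ θ x‖ * 1 := by
          calc ‖fderiv ℝ θ x (fun j' => if j' = j then 1 else 0)‖
              ≤ ‖fderiv ℝ θ x‖ * ‖(fun j' => if j' = j then (1:ℝ) else 0 : Fin d → ℝ)‖ :=
                (fderiv ℝ θ x).le_opNorm _
            _ ≤ ‖fderiv ℝ θ x‖ * 1 := by
                exact mul_le_mul_of_nonneg_left h1 (norm_nonneg _)
      _ ≤ C := by rw [mul_one]; exact hC x
  have hMcont : Continuous M := by
    apply continuous_matrix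
    intro i j
    simp only [hMapply]
    exact (continuous_apply i).comp ((hθ.continuous_fderiv one_ne_zero).clm_apply continuous_const)
  -- determinant function and its derivative
  set ent : ℝ → (Fin d → ℝ) → Fin d → Fin d → ℝ :=
    fun ρ x a b => (if a = b then 1 else 0) + ρ * M x a b with hent_def
  set Ddet : ℝ → (Fin d → ℝ) → ℝ := fun ρ x => Matrix.det (1 + ρ • M x) with hDdet_def
  set D' : ℝ → (Fin d → ℝ) → ℝ := fun ρ x =>
    ∑ σ : Equiv.Perm (Fin d), ((Equiv.Perm.sign σ : ℤ) : ℝ) *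
      ∑ j, (∏ i ∈ Finset.univ.erase j, ent ρ x (σ i) i) • (M x (σ j) j) with hD'_def
  have det_eq : ∀ ρ x, Ddet ρ x = ∑ σ : Equiv.Perm (Fin d),
      ((Equiv.Perm.sign σ : ℤ) : ℝ) * ∏ i, ent ρ x (σ i) i := by
    intro ρ x
    rw [hDdet_def]
    simp only [Matrix.det_apply]
    refine Finset.sum_congr rfl fun σ _ => ?_
    rw [Units.smul_def, zsmul_eq_mul]
    have hentry : ∀ i ∈ Finset.univ, (1 + ρ • M x) (σ i) i = ent ρ x (σ i) i := fun i _ => by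
      simp [hent_def, Matrix.add_apply, Matrix.smul_apply, Matrix.one_apply, smul_eq_mul]
    rw [Finset.prod_congr rfl hentry]
  have hent_deriv : ∀ (x) (a b : Fin d) (ρ : ℝ),
      HasDerivAt (fun ρ => ent ρ x a b) (M x a b) ρ := by
    intro x a b ρ
    exact (hasDerivAt_mul_const (M x a b)).const_add (if a = b then (1:ℝ) else 0)
  have hDdet_deriv : ∀ (ρ : ℝ) (x), HasDerivAt (fun ρ => Ddet ρ x) (D' ρ x) ρ := by
    intro ρ x
    have : (fun ρ => Ddet ρ x) = fun ρ => ∑ σ : Equiv.Perm (Fin d),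
        ((Equiv.Perm.sign σ : ℤ) : ℝ) * ∏ i, ent ρ x (σ i) i := funext fun ρ => det_eq ρ x
    rw [this, hD'_def]
    apply HasDerivAt.fun_sum
    intro σ _
    exact (HasDerivAt.fun_finsetProd fun i _ => hent_deriv x (σ i) i ρ).const_mul _
  -- bounds on Ddet and D'
  have hsign : ∀ σ : Equiv.Perm (Fin d), |((Equiv.Perm.sign σ : ℤ) : ℝ)| = 1 := by
    intro σ
    rcases Int.isUnit_iff.mp (Equiv.Perm.sign σ).isUnit with h | h <;> rw [h] <;> norm_num
  have hent_bound : ∀ ρ ∈ ball (0:ℝ) ε, ∀ x a b, |ent ρ x a b| ≤ 2 := by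
    intro ρ hρ x a b
    have h1 : |ρ| * |M x a b| ≤ |ρ| * C :=
      mul_le_mul_of_nonneg_left (hMbound x a b) (abs_nonneg ρ)
    have h2 := hsmall ρ hρ
    calc |ent ρ x a b| ≤ |if a = b then (1:ℝ) else 0| + |ρ * M x a b| := abs_add_le _ _
      _ ≤ 1 + |ρ| * |M x a b| := by
          rw [abs_mul]
          gcongr
          rcases eq_or_ne a b with h | h <;> simp [h]
      _ ≤ 2 := by nlinarith
  have hprod_bound : ∀ ρ ∈ ball (0:ℝ) ε, ∀ x (σ : Equiv.Perm (Fin d)) (s : Finset (Fin d)),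
      |∏ i ∈ s, ent ρ x (σ i) i| ≤ 2 ^ d := by
    intro ρ hρ x σ s
    rw [Finset.abs_prod]
    calc ∏ i ∈ s, |ent ρ x (σ i) i| ≤ ∏ _i ∈ s, (2:ℝ) :=
          Finset.prod_le_prod (fun i _ => abs_nonneg _) (fun i _ => hent_bound ρ hρ x (σ i) i)
      _ = 2 ^ s.card := Finset.prod_const 2
      _ ≤ 2 ^ d := by
          apply pow_le_pow_right₀ one_le_two
          simpa using (Finset.card_le_card (Finset.subset_univ s)).trans
            (le_of_eq (by simp))
  have hDdet_bound : ∀ ρ ∈ ball (0:ℝ) ε, ∀ x,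
      |Ddet ρ x| ≤ (d.factorial : ℝ) * 2 ^ d := by
    intro ρ hρ x
    rw [det_eq]
    calc |∑ σ : Equiv.Perm (Fin d), ((Equiv.Perm.sign σ : ℤ) : ℝ) * ∏ i, ent ρ x (σ i) i|
        ≤ ∑ σ : Equiv.Perm (Fin d), |((Equiv.Perm.sign σ : ℤ) : ℝ) * ∏ i, ent ρ x (σ i) i| :=
          Finset.abs_sum_le_sum_abs _ _
      _ ≤ ∑ _σ : Equiv.Perm (Fin d), (2:ℝ) ^ d := by
          refine Finset.sum_le_sum fun σ _ => ?_
          rw [abs_mul, hsign σ, one_mul]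
          exact hprod_bound ρ hρ x σ _
      _ = (d.factorial : ℝ) * 2 ^ d := by
          rw [Finset.sum_const, Finset.card_univ, Fintype.card_perm, Fintype.card_fin,
            nsmul_eq_mul]
  have hD'_bound : ∀ ρ ∈ ball (0:ℝ) ε, ∀ x,
      |D' ρ x| ≤ (d.factorial : ℝ) * ((d : ℝ) * (2 ^ d * C)) := by
    intro ρ hρ x
    rw [hD'_def]
    calc |∑ σ : Equiv.Perm (Fin d), ((Equiv.Perm.sign σ : ℤ) : ℝ) *
          ∑ j, (∏ i ∈ Finset.univ.erase j, ent ρ x (σ i) i) • (M x (σ j) j)|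
        ≤ ∑ σ : Equiv.Perm (Fin d), |((Equiv.Perm.sign σ : ℤ) : ℝ) *
          ∑ j, (∏ i ∈ Finset.univ.erase j, ent ρ x (σ i) i) • (M x (σ j) j)| :=
          Finset.abs_sum_le_sum_abs _ _
      _ ≤ ∑ _σ : Equiv.Perm (Fin d), (d : ℝ) * (2 ^ d * C) := by
          refine Finset.sum_le_sum fun σ _ => ?_
          rw [abs_mul, hsign σ, one_mul]
          calc |∑ j, (∏ i ∈ Finset.univ.erase j, ent ρ x (σ i) i) • (M x (σ j) j)|
              ≤ ∑ j, |(∏ i ∈ Finset.univ.erase j, ent ρ x (σ i) i) • (M x (σ j) j)| :=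
                Finset.abs_sum_le_sum_abs _ _
            _ ≤ ∑ _j : Fin d, (2:ℝ) ^ d * C := by
                refine Finset.sum_le_sum fun j _ => ?_
                rw [smul_eq_mul, abs_mul]
                exact mul_le_mul (hprod_bound ρ hρ x σ _) (hMbound x _ _)
                  (abs_nonneg _) (by positivity)
            _ = (d : ℝ) * (2 ^ d * C) := by
                rw [Finset.sum_const, Finset.card_univ, Fintype.card_fin, nsmul_eq_mul]
      _ = (d.factorial : ℝ) * ((d : ℝ) * (2 ^ d * C)) := by
          rw [Finset.sum_const, Finset.card_univ, Fintype.card_perm, Fintype.card_fin,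
            nsmul_eq_mul]
  -- continuity in x
  have hDdet_cont : ∀ ρ, Continuous fun x => Ddet ρ x := by
    intro ρ
    exact (continuous_const.add (hMcont.const_smul ρ)).matrix_det
  have hD'_cont : ∀ ρ, Continuous fun x => D' ρ x := by
    intro ρ
    rw [hD'_def]
    refine continuous_finset_sum _ fun σ _ => Continuous.mul continuous_const ?_
    refine continuous_finset_sum _ fun j _ => Continuous.fun_smul ?_ (hMcont.matrix_elem _ _)
    refine continuous_finset_prod _ fun i _ => ?_
    exact continuous_const.add (continuous_const.mul (hMcont.matrix_elem _ _))
  -- the integrand and its derivative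
  set F : ℝ → (Fin d → ℝ) → ℝ := fun ρ x => Ddet ρ x * f (x + ρ • θ x) with hF_def
  set F' : ℝ → (Fin d → ℝ) → ℝ := fun ρ x =>
    D' ρ x * f (x + ρ • θ x) + Ddet ρ x * (fderiv ℝ f (x + ρ • θ x)) (θ x) with hF'_def
  have hT_deriv : ∀ (x) (ρ : ℝ), HasDerivAt (fun ρ : ℝ => x + ρ • θ x) (θ x) ρ := by
    intro x ρ
    simpa using ((hasDerivAt_id ρ).smul_const (θ x)).const_add x
  have hF_deriv : ∀ (x) (ρ : ℝ), HasDerivAt (fun ρ => F ρ x) (F' ρ x) ρ := by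
    intro x ρ
    exact (hDdet_deriv ρ x).mul ((hfd _).hasFDerivAt.comp_hasDerivAt ρ (hT_deriv x ρ))
  -- bounds on f and θ
  obtain ⟨Kf, hKf⟩ := hfc.exists_bound_of_continuous hf.continuous
  obtain ⟨Kdf, hKdf⟩ := (hfc.fderiv ℝ).exists_bound_of_continuous (hf.continuous_fderiv one_ne_zero)
  have hKf0 : 0 ≤ Kf := le_trans (norm_nonneg _) (hKf 0)
  have hKdf0 : 0 ≤ Kdf := le_trans (norm_nonneg _) (hKdf 0)
  obtain ⟨R, hR⟩ := isBounded_iff_forall_norm_le.mp hΩb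
  set Kθ : ℝ := ‖θ 0‖ + C * R with hKθ_def
  have hθbound : ∀ x ∈ Ω, ‖θ x‖ ≤ Kθ := by
    intro x hx
    calc ‖θ x‖ = ‖(θ x - θ 0) + θ 0‖ := by rw [sub_add_cancel]
      _ ≤ ‖θ x - θ 0‖ + ‖θ 0‖ := norm_add_le _ _
      _ ≤ C * ‖x - 0‖ + ‖θ 0‖ := by gcongr; exact hθsub x 0
      _ ≤ C * R + ‖θ 0‖ := by
          rw [sub_zero]
          gcongr
          exact hR x hx
      _ = Kθ := by rw [hKθ_def]; ring
  -- the measure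
  set μ : Measure (Fin d → ℝ) := volume.restrict Ω with hμ_def
  haveI : IsFiniteMeasure μ := by
    constructor
    rw [hμ_def, Measure.restrict_apply_univ]
    exact hΩb.measure_lt_top
  -- global bound for F'
  set K : ℝ := (d.factorial : ℝ) * ((d : ℝ) * (2 ^ d * C)) * Kf +
      (d.factorial : ℝ) * 2 ^ d * (Kdf * Kθ) with hK_def
  have hF'_bound : ∀ x ∈ Ω, ∀ ρ ∈ ball (0:ℝ) ε, ‖F' ρ x‖ ≤ K := by
    intro x hx ρ hρ
    rw [hF'_def, Real.norm_eq_abs]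
    have h1 : |D' ρ x * f (x + ρ • θ x)| ≤ (d.factorial : ℝ) * ((d : ℝ) * (2 ^ d * C)) * Kf := by
      rw [abs_mul]
      exact mul_le_mul (hD'_bound ρ hρ x) (hKf _) (abs_nonneg _)
        (by positivity)
    have h2 : |Ddet ρ x * (fderiv ℝ f (x + ρ • θ x)) (θ x)| ≤
        (d.factorial : ℝ) * 2 ^ d * (Kdf * Kθ) := by
      rw [abs_mul]
      refine mul_le_mul (hDdet_bound ρ hρ x) ?_ (abs_nonneg _) (by positivity)
      calc |(fderiv ℝ f (x + ρ • θ x)) (θ x)| ≤ ‖fderiv ℝ f (x + ρ • θ x)‖ * ‖θ x‖ :=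
            (fderiv ℝ f _).le_opNorm _
        _ ≤ Kdf * Kθ := mul_le_mul (hKdf _) (hθbound x hx) (norm_nonneg _) hKdf0
    calc |D' ρ x * f (x + ρ • θ x) + Ddet ρ x * (fderiv ℝ f (x + ρ • θ x)) (θ x)|
        ≤ |D' ρ x * f (x + ρ • θ x)| + |Ddet ρ x * (fderiv ℝ f (x + ρ • θ x)) (θ x)| := abs_add_le _ _
      _ ≤ K := by rw [hK_def]; linarith
  -- measurability
  have hFx_cont : ∀ ρ, Continuous fun x => F ρ x := by
    intro ρ
    exact (hDdet_cont ρ).mul (hf.continuous.comp (continuous_id.add (hθ.continuous.const_smul ρ)))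
  have hF'x_cont : ∀ ρ, Continuous fun x => F' ρ x := by
    intro ρ
    have hTc : Continuous fun x => x + ρ • θ x :=
      continuous_id.add (hθ.continuous.const_smul ρ)
    refine ((hD'_cont ρ).mul (hf.continuous.comp hTc)).add ((hDdet_cont ρ).mul ?_)
    exact (((hf.continuous_fderiv one_ne_zero).comp hTc).clm_apply hθ.continuous)
  -- apply dominated differentiation
  have hmain := hasDerivAt_integral_of_dominated_loc_of_deriv_le (μ := μ)
    (F := F) (F' := F') (x₀ := (0:ℝ)) (bound := fun _ => K) (ball_mem_nhds (0:ℝ) hε)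
    (Eventually.of_forall fun ρ => (hFx_cont ρ).aestronglyMeasurable)
    ?_ ((hF'x_cont 0).aestronglyMeasurable) ?_ (integrable_const K) ?_
  rotate_left
  · -- Integrable (F 0) μ
    refine Integrable.mono' (integrable_const ((d.factorial : ℝ) * 2 ^ d * Kf))
      (hFx_cont 0).aestronglyMeasurable (Eventually.of_forall fun x => ?_)
    rw [hF_def, Real.norm_eq_abs, abs_mul]
    exact mul_le_mul (hDdet_bound 0 (mem_ball_self hε) x) (hKf _) (abs_nonneg _) (by positivity)
  · -- a.e. bound
    rw [hμ_def]
    rw [ae_restrict_iff' hΩm]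
    exact Eventually.of_forall fun x hx ρ hρ => hF'_bound x hx ρ hρ
  · -- a.e. differentiability
    exact Eventually.of_forall fun x ρ _ => hF_deriv x ρ
  obtain ⟨-, hderiv⟩ := hmain
  -- identify the derivative integrand at 0
  have hD'0 : ∀ x, D' 0 x = Matrix.trace (M x) := by
    intro x
    have h1 : HasDerivAt (fun ρ => Ddet ρ x) (D' 0 x) 0 := hDdet_deriv 0 x
    set Q : Polynomial ℝ :=
      (Matrix.det (1 + (Polynomial.X : Polynomial ℝ) • (M x).map Polynomial.C)).divX.divX with hQ
    have h2 : HasDerivAt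
        (fun ρ : ℝ => 1 + Matrix.trace (M x) * ρ + Q.eval ρ * ρ ^ 2)
        (Matrix.trace (M x)) 0 := by
      have ha : HasDerivAt (fun ρ : ℝ => 1 + Matrix.trace (M x) * ρ)
          (Matrix.trace (M x)) 0 := by
        simpa using ((hasDerivAt_id (0:ℝ)).const_mul (Matrix.trace (M x))).const_add 1
      have hb : HasDerivAt (fun ρ : ℝ => Q.eval ρ * ρ ^ 2)
          (Q.derivative.eval 0 * 0 ^ 2 + Q.eval 0 * ((2:ℕ) * 0 ^ 1)) 0 :=
        (Q.hasDerivAt 0).mul (hasDerivAt_pow 2 0)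
      exact (ha.add hb).congr_deriv (by simp)
    have h3 : HasDerivAt (fun ρ => Ddet ρ x) (Matrix.trace (M x)) 0 := by
      refine h2.congr_of_eventuallyEq (Eventually.of_forall fun ρ => ?_)
      rw [hDdet_def]
      exact Matrix.det_one_add_smul ρ (M x)
    exact h1.unique h3
  have htrace : ∀ x, Matrix.trace (M x) =
      LinearMap.trace ℝ (Fin d → ℝ) (fderiv ℝ θ x).toLinearMap := by
    intro x
    rw [LinearMap.trace_eq_matrix_trace ℝ (Pi.basisFun ℝ (Fin d))]
    rfl
  have hF'0 : ∀ x, F' 0 x =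
      fderiv ℝ f x (θ x) + f x * LinearMap.trace ℝ (Fin d → ℝ) (fderiv ℝ θ x).toLinearMap := by
    intro x
    rw [hF'_def]
    simp only [zero_smul, add_zero, hD'0 x, htrace x]
    have : Ddet 0 x = 1 := by
      rw [hDdet_def]
      simp
    rw [this]
    ring
  have hint_eq : (∫ x, F' 0 x ∂μ) = ∫ x in Ω,
      (fderiv ℝ f x (θ x) + f x * LinearMap.trace ℝ (Fin d → ℝ) (fderiv ℝ θ x).toLinearMap) := by
    rw [hμ_def]
    exact integral_congr_ae (Eventually.of_forall fun x => hF'0 x)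
  rw [hint_eq] at hderiv
  -- identify j with the integral of F near 0
  refine hderiv.congr_of_eventuallyEq ?_
  filter_upwards [ball_mem_nhds (0:ℝ) hε] with ρ hρ
  -- change of variables
  set T : (Fin d → ℝ) → (Fin d → ℝ) := fun x => x + ρ • θ x with hT_def
  set L : (Fin d → ℝ) → ((Fin d → ℝ) →L[ℝ] (Fin d → ℝ)) :=
    fun x => ContinuousLinearMap.id ℝ (Fin d → ℝ) + ρ • fderiv ℝ θ x with hL_def
  have hLd : ∀ x ∈ Ω, HasFDerivWithinAt T (L x) Ω x := by
    intro x _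
    exact ((hasFDerivAt_id x).add ((hθd x).hasFDerivAt.const_smul ρ)).hasFDerivWithinAt
  have hinj : Function.Injective T := by
    intro x y hxy
    have h' : x + ρ • θ x = ρ • θ y + y := by
      rw [add_comm (ρ • θ y) y]
      exact hxy
    have hxy0 : x - y = ρ • (θ y - θ x) := by
      rw [smul_sub, sub_eq_sub_iff_add_eq_add]
      exact h'
    by_contra hne
    have hposn : 0 < ‖x - y‖ := norm_pos_iff.mpr (sub_ne_zero_of_ne hne)
    have hb : ‖x - y‖ ≤ |ρ| * (C * ‖x - y‖) := by
      conv_lhs => rw [hxy0]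
      rw [norm_smul, Real.norm_eq_abs]
      refine mul_le_mul_of_nonneg_left ?_ (abs_nonneg ρ)
      calc ‖θ y - θ x‖ ≤ C * ‖y - x‖ := hθsub y x
        _ = C * ‖x - y‖ := by rw [norm_sub_rev]
    have h2 := hsmall ρ hρ
    nlinarith
  have hdet_eq : ∀ x, (L x).det = Ddet ρ x := by
    intro x
    rw [hL_def, hDdet_def]
    show LinearMap.det _ = _
    have : ((ContinuousLinearMap.id ℝ (Fin d → ℝ) + ρ • fderiv ℝ θ x :
        (Fin d → ℝ) →L[ℝ] (Fin d → ℝ)) : (Fin d → ℝ) →ₗ[ℝ] (Fin d → ℝ)) =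
        LinearMap.id + ρ • (fderiv ℝ θ x).toLinearMap := rfl
    rw [this, ← LinearMap.det_toMatrix', map_add, _root_.map_smul, LinearMap.toMatrix'_id, hM_def]
  have hpos : ∀ x, 0 < Ddet ρ x := by
    intro x
    by_contra hle
    push_neg at hle
    have hg_cont : Continuous fun t : ℝ => Ddet (t * ρ) x := by
      rw [hDdet_def]
      exact (continuous_const.add (((continuous_id.mul continuous_const)).smul
        continuous_const)).matrix_det
    have hg0 : Ddet (0 * ρ) x = 1 := by
      rw [hDdet_def]
      simp
    have hne : ∀ t ∈ Set.Icc (0:ℝ) 1, Ddet (t * ρ) x ≠ 0 := by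
      intro t ht h0
      have hs : |t * ρ| * C < 1 := by
        have h1 : |t * ρ| ≤ |ρ| := by
          rw [abs_mul]
          have ht' : |t| ≤ 1 := abs_le.mpr ⟨by linarith [ht.1], ht.2⟩
          nlinarith [abs_nonneg ρ, abs_nonneg t]
        have := hsmall ρ hρ
        nlinarith [abs_nonneg (t * ρ)]
      -- Ddet (t*ρ) x = det of the linear map id + (t*ρ) • fderiv θ x
      have hdet2 : LinearMap.det
          (LinearMap.id + (t * ρ) • (fderiv ℝ θ x).toLinearMap) = Ddet (t * ρ) x := by
        simp only [hDdet_def]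
        rw [← LinearMap.det_toMatrix', map_add, _root_.map_smul, LinearMap.toMatrix'_id, hM_def]
      rw [← hdet2] at h0
      obtain ⟨v, hv, hv0⟩ := (Submodule.ne_bot_iff _).mp
        (LinearMap.bot_lt_ker_of_det_eq_zero h0).ne'
      apply hv0
      have hv' : v + (t * ρ) • fderiv ℝ θ x v = 0 := by
        simpa using hv
      have hnv : ‖v‖ ≤ |t * ρ| * (C * ‖v‖) := by
        have : v = -((t * ρ) • fderiv ℝ θ x v) := eq_neg_of_add_eq_zero_left hv'
        calc ‖v‖ = |t * ρ| * ‖fderiv ℝ θ x v‖ := by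
              conv_lhs => rw [this]
              rw [norm_neg, norm_smul, Real.norm_eq_abs]
          _ ≤ |t * ρ| * (‖fderiv ℝ θ x‖ * ‖v‖) :=
              mul_le_mul_of_nonneg_left ((fderiv ℝ θ x).le_opNorm v) (abs_nonneg _)
          _ ≤ |t * ρ| * (C * ‖v‖) := by
              apply mul_le_mul_of_nonneg_left _ (abs_nonneg _)
              exact mul_le_mul_of_nonneg_right (hC x) (norm_nonneg v)
      by_contra hv0'
      have : 0 < ‖v‖ := norm_pos_iff.mpr hv0'
      nlinarith
    have : (0:ℝ) ∈ Set.Icc (Ddet (1 * ρ) x) (Ddet (0 * ρ) x) := by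
      rw [hg0]
      constructor
      · rw [one_mul]; exact hle
      · norm_num
    obtain ⟨t, ht, ht0⟩ := intermediate_value_Icc' zero_le_one hg_cont.continuousOn this
    exact hne t ht ht0
  calc (∫ x in T '' Ω, f x) = ∫ x in Ω, |(L x).det| • f (T x) :=
        integral_image_eq_integral_abs_det_fderiv_smul volume hΩm hLd hinj.injOn f
    _ = ∫ x, F ρ x ∂μ := by
        rw [hμ_def]
        refine integral_congr_ae (Eventually.of_forall fun x => ?_)
        show |(L x).det| • f (T x) = F ρ x
        rw [hdet_eq x, abs_of_pos (hpos x), smul_eq_mul, hF_def]
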